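/- Let B be a complete c.c.c. Boolean algebra and F a filter on B with cof(F) < 𝔡 (the dominating number). For every maximal antichain P in B and every countable family {Xₙ : n < ω} of subsets of P with ⋁Xₙ ∈ F for all n, there exists Y ⊆ P such that F ∪ {⋁Y} has the finite intersection property and Y \ Xₙ is finite for all n < ω. -/

import Mathlib

universe u

/-- A (proper) filter on a Boolean algebra, as a set. -/
def IsBAFilter {B : Type*} [BooleanAlgebra B] (F : Set B) : Prop :=
  ⊤ ∈ F ∧ ⊥ ∉ F ∧ (∀ x ∈ F, ∀ y : B, x ≤ y → y ∈ F) ∧ ∀ x ∈ F, ∀ y ∈ F, x ⊓ y ∈ F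

/-- A maximal antichain in a complete Boolean algebra. -/
def IsBAMaxAntichain {B : Type*} [CompleteBooleanAlgebra B] (A : Set B) : Prop :=
  (∀ x ∈ A, x ≠ ⊥) ∧ (A.Pairwise fun x y => x ⊓ y = ⊥) ∧ sSup A = ⊤

/-- The cofinality of a filter `F`: the least cardinality of a cofinal subset
of `⟨F,≥⟩`. -/
noncomputable def cofSet {B : Type u} [CompleteBooleanAlgebra B] (F : Set B) :
    Cardinal.{u} :=
  sInf {c : Cardinal.{u} | ∃ C ⊆ F, Cardinal.mk C = c ∧ ∀ u ∈ F, ∃ x ∈ C, x ≤ u}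

/-- The dominating number `𝔡`. -/
noncomputable def domNumber : Cardinal.{0} :=
  sInf {c : Cardinal.{0} | ∃ D : Set (ℕ → ℕ), Cardinal.mk D = c ∧
    ∀ f : ℕ → ℕ, ∃ g ∈ D, ∃ N : ℕ, ∀ n ≥ N, f n ≤ g n}

/-- Ketonen/Starý: if `B` is a complete c.c.c. Boolean algebra and `F` a
filter with `cof(F) < 𝔡`, then for every maximal antichain `P` and sets
`Xₙ ⊆ P` with `⋁Xₙ ∈ F`, there is `Y ⊆ P` such that `F ∪ {⋁Y}` has the finite
intersection property and `Y \ Xₙ` is finite for all `n`. -/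
theorem stmt_15 {B : Type u} [CompleteBooleanAlgebra B]
    (hccc : ∀ A : Set B, (∀ x ∈ A, x ≠ ⊥) → (A.Pairwise fun x y => x ⊓ y = ⊥) →
      A.Countable)
    (F : Set B) (hF : IsBAFilter F)
    (hcof : cofSet F < Cardinal.lift.{u} domNumber)
    (P : Set B) (hP : IsBAMaxAntichain P)
    (X : ℕ → Set B) (hX : ∀ n, X n ⊆ P) (hXF : ∀ n, sSup (X n) ∈ F) :
    ∃ Y ⊆ P, (∀ Q : Finset B, (↑Q : Set B) ⊆ insert (sSup Y) F → Q.inf id ≠ ⊥) ∧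
      ∀ n, (Y \ X n).Finite := by
  classical
  obtain ⟨hFtop, hFbot, hFup, hFinf⟩ := hF
  obtain ⟨hPne, hPpair, hPtop⟩ := hP
  have hFne : ∀ u ∈ F, u ≠ ⊥ := fun u hu h => hFbot (h ▸ hu)
  have htb : (⊤ : B) ≠ ⊥ := hFne ⊤ hFtop
  have hPnonempty : P.Nonempty := by
    rcases Set.eq_empty_or_nonempty P with h | h
    · exact absurd (by rw [h, sSup_empty] at hPtop; exact hPtop.symm) htb
    · exact h
  obtain ⟨e, he⟩ := (hccc P hPne hPpair).exists_eq_range hPnonempty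
  -- key antichain lemma
  have key : ∀ S T : Set B, S ⊆ P → T ⊆ P → sSup S ⊓ sSup T ≤ sSup (S ∩ T) := by
    intro S T hS hT
    rw [sSup_inf_sSup]
    refine iSup₂_le fun p hp => ?_
    obtain ⟨x, y⟩ := p
    rcases Set.mem_prod.mp hp with ⟨h1, h2⟩
    by_cases hpq : x = y
    · subst hpq
      exact le_trans inf_le_left (le_sSup ⟨h1, h2⟩)
    · rw [show x ⊓ y = ⊥ from hPpair (hS h1) (hT h2) hpq]
      exact bot_le
  -- the decreasing sequence Z
  set Z : ℕ → Set B := fun n => ⋂ i ≤ n, X i with hZ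
  have hZX : ∀ m n, m ≤ n → Z n ⊆ X m := fun m n h x hx => Set.mem_iInter₂.mp hx m h
  have hZP : ∀ n, Z n ⊆ P := fun n => (hZX 0 n (Nat.zero_le n)).trans (hX 0)
  have hZF : ∀ n, sSup (Z n) ∈ F := by
    intro n
    induction n with
    | zero =>
      have : Z 0 = X 0 := by
        ext x; simp [hZ, Nat.le_zero]
      rw [this]; exact hXF 0
    | succ n ih =>
      have hz : Z (n+1) = Z n ∩ X (n+1) := Set.biInter_le_succ X n
      have h1 : sSup (Z n) ⊓ sSup (X (n+1)) ∈ F := hFinf _ ih _ (hXF (n+1))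
      refine hFup _ h1 _ ?_
      rw [hz]
      exact key _ _ (hZP n) (hX (n+1))
  -- existence of suitable indices
  have hex : ∀ u ∈ F, ∀ n : ℕ, ∃ k : ℕ, e k ∈ Z n ∧ u ⊓ e k ≠ ⊥ := by
    intro u hu n
    by_contra hcon
    push_neg at hcon
    have h1 : u ⊓ sSup (Z n) ∈ F := hFinf _ hu _ (hZF n)
    have h2 : u ⊓ sSup (Z n) = ⊥ := by
      rw [inf_sSup_eq]
      refine le_antisymm (iSup₂_le fun b hb => ?_) bot_le
      obtain ⟨k, rfl⟩ : b ∈ Set.range e := he ▸ hZP n hb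
      exact (hcon k hb).le
    exact hFne _ h1 h2
  -- cofinal set
  have hmem : cofSet F ∈ {c : Cardinal.{u} | ∃ C ⊆ F, Cardinal.mk C = c ∧
      ∀ u ∈ F, ∃ x ∈ C, x ≤ u} := by
    apply csInf_mem
    exact ⟨_, F, Set.Subset.rfl, rfl, fun u hu => ⟨u, hu, le_rfl⟩⟩
  obtain ⟨C, hCF, hCcard, hCcof⟩ := hmem
  -- the functions
  let fu : C → ℕ → ℕ := fun c n => (hex c.1 (hCF c.2) n).choose
  have hfu : ∀ (c : C) (n : ℕ), e (fu c n) ∈ Z n ∧ (c : B) ⊓ e (fu c n) ≠ ⊥ :=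
    fun c n => (hex c.1 (hCF c.2) n).choose_spec
  set D : Set (ℕ → ℕ) := Set.range fu with hD
  have hDcard : Cardinal.mk D < domNumber := by
    have h1 : Cardinal.lift.{u} (Cardinal.mk D) ≤ Cardinal.lift.{0} (Cardinal.mk C) :=
      Cardinal.mk_range_le_lift
    rw [Cardinal.lift_uzero, hCcard] at h1
    exact Cardinal.lift_lt.mp (lt_of_le_of_lt h1 hcof)
  -- D is not dominating
  have hnotdom : ∃ f : ℕ → ℕ, ∀ g ∈ D, ∀ N : ℕ, ∃ n ≥ N, g n < f n := by
    by_contra hcon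
    push_neg at hcon
    have hdom : ∀ f : ℕ → ℕ, ∃ g ∈ D, ∃ N : ℕ, ∀ n ≥ N, f n ≤ g n := by
      intro f
      obtain ⟨g, hg, N, hN⟩ := hcon f
      exact ⟨g, hg, N, hN⟩
    have : domNumber ≤ Cardinal.mk D :=
      csInf_le (OrderBot.bddBelow _) ⟨D, rfl, hdom⟩
    exact absurd hDcard (not_lt.mpr this)
  obtain ⟨f, hf⟩ := hnotdom
  -- the set Y
  set Y : Set B := ⋃ n, (Z n ∩ e '' Set.Iio (f n)) with hY
  have hYP : Y ⊆ P := Set.iUnion_subset fun n => (Set.inter_subset_left).trans (hZP n)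
  refine ⟨Y, hYP, ?_, ?_⟩
  · -- FIP
    have hkey : ∀ u ∈ F, u ⊓ sSup Y ≠ ⊥ := by
      intro u hu
      obtain ⟨c, hcC, hcu⟩ := hCcof u hu
      obtain ⟨n, -, hn⟩ := hf (fu ⟨c, hcC⟩) ⟨⟨c, hcC⟩, rfl⟩ 0
      obtain ⟨hz, hne⟩ := hfu ⟨c, hcC⟩ n
      have hy : e (fu ⟨c, hcC⟩ n) ∈ Y :=
        Set.mem_iUnion.mpr ⟨n, hz, ⟨fu ⟨c, hcC⟩ n, hn, rfl⟩⟩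
      have hle : c ⊓ e (fu ⟨c, hcC⟩ n) ≤ u ⊓ sSup Y :=
        inf_le_inf hcu (le_sSup hy)
      intro h0
      exact hne (le_antisymm (h0 ▸ hle) bot_le)
    intro Q hQ
    -- every such Q has inf above u ⊓ sSup Y for some u ∈ F
    have hind : ∀ Q : Finset B, (↑Q : Set B) ⊆ insert (sSup Y) F →
        ∃ u ∈ F, u ⊓ sSup Y ≤ Q.inf id := by
      intro Q
      induction Q using Finset.induction_on with
      | empty => exact fun _ => ⟨⊤, hFtop, by simp⟩
      | @insert a s hx ih =>
        intro hins
        have hsub : (↑s : Set B) ⊆ insert (sSup Y) F :=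
          fun x hxm => hins (by simp [hxm])
        obtain ⟨u, huF, hule⟩ := ih hsub
        have ha : a ∈ insert (sSup Y) F := hins (by simp)
        rw [Finset.inf_insert]
        rcases ha with ha | ha
        · exact ⟨u, huF, le_inf (ha ▸ inf_le_right) hule⟩
        · exact ⟨a ⊓ u, hFinf a ha u huF, le_inf
            (le_trans inf_le_left inf_le_left)
            (le_trans (inf_le_inf_right _ inf_le_right) hule)⟩
    obtain ⟨u, huF, hule⟩ := hind Q hQ
    intro h0
    exact hkey u huF (le_antisymm (h0 ▸ hule) bot_le)
  · -- Y \ X m finite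
    intro m
    have hsub : Y \ X m ⊆ ⋃ n ∈ Finset.range m, (e '' Set.Iio (f n)) := by
      rintro x ⟨hxY, hxX⟩
      obtain ⟨n, hn⟩ := Set.mem_iUnion.mp hxY
      have hnm : n < m := by
        by_contra h
        exact hxX (hZX m n (le_of_not_gt h) hn.1)
      exact Set.mem_biUnion (Finset.mem_range.mpr hnm) hn.2
    exact Set.Finite.subset
      (Set.Finite.biUnion (Finset.finite_toSet _)
        (fun n _ => (Set.finite_Iio _).image e)) hsub
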